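/- arXiv:2001.00659 — 5 statements merged into one kernel-verified Lean document; each statement's English description precedes it below -/
import Mathlib

section
/- Let G be an abelian, transitive subgroup of S_{2^n} that is not contained in the alternating group A_{2^n}. Then G is cyclic (generated by a 2^n-cycle). -/
theorem stmt_3 {n : ℕ} (hn : 1 ≤ n) (G : Subgroup (Equiv.Perm (Fin (2 ^ n))))
    (hab : ∀ g ∈ G, ∀ h ∈ G, g * h = h * g)
    (htrans : ∀ x y : Fin (2 ^ n), ∃ g ∈ G, g x = y)
    (hodd : ∃ g ∈ G, Equiv.Perm.sign g = -1) :
    ∃ σ ∈ G, σ.IsCycle ∧ σ.support.card = 2 ^ n ∧ ∀ τ ∈ G, τ ∈ Subgroup.zpowers σ := by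
  classical
  obtain ⟨g, hgG, hsg⟩ := hodd
  have hpos : 0 < 2 ^ n := by positivity
  -- freeness: any element of G with a fixed point is the identity
  have hfree : ∀ h ∈ G, (∃ x, h x = x) → h = 1 := by
    rintro h hh ⟨x, hx⟩
    ext y
    obtain ⟨k, hkG, hky⟩ := htrans x y
    have hcomm := hab h hh k hkG
    have hyk : h y = (h * k) x := by rw [Equiv.Perm.mul_apply, hky]
    rw [hyk, hcomm, Equiv.Perm.mul_apply, hx, hky]
    rfl
  set x0 : Fin (2 ^ n) := ⟨0, hpos⟩ with hx0
  -- cardinality of G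
  have hbij : Function.Bijective (fun h : G => (h : Equiv.Perm (Fin (2 ^ n))) x0) := by
    constructor
    · rintro ⟨a, ha⟩ ⟨b, hb⟩ hab'
      simp only [Subtype.mk_eq_mk] at hab' ⊢
      have hmem : b * a⁻¹ ∈ G := mul_mem hb (inv_mem ha)
      have hfix : (b * a⁻¹) (a x0) = a x0 := by
        rw [Equiv.Perm.mul_apply, (by simp : a⁻¹ (a x0) = x0), ← hab']
      have h1 := hfree _ hmem ⟨a x0, hfix⟩
      exact (mul_inv_eq_one.mp h1).symm
    · intro y
      obtain ⟨k, hk, hky⟩ := htrans x0 y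
      exact ⟨⟨k, hk⟩, hky⟩
  have hcardG : Nat.card G = 2 ^ n := by
    rw [Nat.card_eq_fintype_card, Fintype.card_of_bijective hbij, Fintype.card_fin]
  -- order of g divides 2^n
  have hdvd : orderOf g ∣ 2 ^ n := by
    have h1 : orderOf (⟨g, hgG⟩ : G) ∣ Fintype.card G := orderOf_dvd_card
    rwa [Subgroup.orderOf_mk, ← Nat.card_eq_fintype_card, hcardG] at h1
  have hg1 : g ≠ 1 := by
    intro h
    rw [h] at hsg
    simp at hsg
  -- g has no fixed points, so its support is everything
  have hsupp : g.support = Finset.univ := by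
    apply Finset.eq_univ_iff_forall.mpr
    intro x
    rw [Equiv.Perm.mem_support]
    intro hx
    exact hg1 (hfree g hgG ⟨x, hx⟩)
  have hsuppcard : g.support.card = 2 ^ n := by
    rw [hsupp, Finset.card_univ, Fintype.card_fin]
  -- every cycle length of g equals orderOf g
  have hentries : ∀ r ∈ g.cycleType, r = orderOf g := by
    intro r hr
    rw [Equiv.Perm.cycleType_def, Multiset.mem_map] at hr
    obtain ⟨c, hc, hcr⟩ := hr
    have hcr' : c.support.card = r := hcr
    have hcF : c ∈ g.cycleFactorsFinset := by rwa [Finset.mem_def]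
    have hc' := hcF
    rw [Equiv.Perm.mem_cycleFactorsFinset_iff] at hc'
    obtain ⟨hcyc, -⟩ := hc'
    obtain ⟨x, hx⟩ : c.support.Nonempty := by
      rw [← Finset.card_pos, hcr']
      have := hcyc.two_le_card_support
      omega
    have hceq : c = g.cycleOf x := Equiv.Perm.cycle_is_cycleOf hx hcF
    have horderc : orderOf c = r := by rw [hcyc.orderOf, hcr']
    have hxne : c x ≠ x := Equiv.Perm.mem_support.mp hx
    -- r ∣ orderOf g
    have hr1 : r ∣ orderOf g := by
      rw [← horderc]
      apply orderOf_dvd_of_pow_eq_one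
      refine (hcyc.pow_eq_one_iff' hxne).mpr ?_
      rw [hceq, Equiv.Perm.cycleOf_pow_apply_self, pow_orderOf_eq_one]
      rfl
    -- orderOf g ∣ r
    have hr2 : orderOf g ∣ r := by
      have hfixr : (g ^ r) x = x := by
        rw [← Equiv.Perm.cycleOf_pow_apply_self, ← hceq, ← horderc, pow_orderOf_eq_one]
        rfl
      exact orderOf_dvd_of_pow_eq_one (hfree _ (pow_mem hgG r) ⟨x, hfixr⟩)
    exact Nat.dvd_antisymm hr1 hr2
  set m := Multiset.card g.cycleType with hm
  have hrep : g.cycleType = Multiset.replicate m (orderOf g) :=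
    Multiset.eq_replicate_card.mpr hentries
  have hsum : g.cycleType.sum = m * orderOf g := by
    rw [hrep, Multiset.sum_replicate, smul_eq_mul]
  have hmd : m * orderOf g = 2 ^ n := by
    rw [← hsum, Equiv.Perm.sum_cycleType, hsuppcard]
  -- m is odd from the sign condition
  have hmodd : Odd m := by
    by_contra hme
    rw [Nat.not_odd_iff_even] at hme
    have heven : Even (g.cycleType.sum + m) := by
      refine Even.add ?_ hme
      rw [Equiv.Perm.sum_cycleType, hsuppcard]
      exact (Nat.even_pow).mpr ⟨even_two, by omega⟩
    have := Equiv.Perm.sign_of_cycleType g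
    rw [hsg, ← hm, heven.neg_one_pow] at this
    exact absurd this (by decide)
  -- m divides 2^n and is odd, hence m = 1
  have hm1 : m = 1 := by
    have hmdvd : m ∣ 2 ^ n := ⟨orderOf g, hmd.symm⟩
    have hnd : ¬ (2 ∣ m) := by
      have := Nat.odd_iff.mp hmodd
      omega
    have hcop : Nat.Coprime m 2 := (Nat.Prime.coprime_iff_not_dvd Nat.prime_two).mpr hnd |>.symm
    exact Nat.Coprime.eq_one_of_dvd (hcop.pow_right n) hmdvd
  have hcyc : g.IsCycle := Equiv.Perm.card_cycleType_eq_one.mp (by rw [← hm, hm1])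
  have horder : orderOf g = 2 ^ n := by rw [hm1, one_mul] at hmd; exact hmd
  have hle : Subgroup.zpowers g ≤ G := Subgroup.zpowers_le.mpr hgG
  have heq : Subgroup.zpowers g = G := by
    apply Subgroup.eq_of_le_of_card_ge hle
    rw [hcardG, Nat.card_zpowers, horder]
  exact ⟨g, hgG, hcyc, hsuppcard, fun τ hτ => heq ▸ hτ⟩
end

section
/- For a tamely ramified prime 𝔮 of L over 𝔭 in a Galois extension L/K, the map sending σ in the inertia group I(𝔮/𝔭) to the class of σ(π)/π modulo 𝔮, where π is a uniformizer for 𝔮, is a well-defined injective group homomorphism from I(𝔮/𝔭) to the multiplicative group (O_L/𝔮)^×. -/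
open NumberField

set_option linter.unusedSectionVars false
set_option maxHeartbeats 1000000
set_option synthInstance.maxHeartbeats 400000

namespace Stmt7Aux

open Ideal

section Basic

variable {R O : Type*} [CommRing R] [CommRing O] [IsDomain O] [IsDedekindDomain O] [Algebra R O]
variable (𝔮 : Ideal O)

lemma inv_inert {σ : O ≃ₐ[R] O} (hσ : ∀ x, σ x - x ∈ 𝔮) : ∀ x, σ⁻¹ x - x ∈ 𝔮 := by
  intro x
  have h := hσ (σ⁻¹ x)
  have h2 : σ (σ⁻¹ x) = x := σ.apply_symm_apply x
  rw [h2] at h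
  simpa using neg_mem h

lemma mul_inert {σ τ : O ≃ₐ[R] O} (hσ : ∀ x, σ x - x ∈ 𝔮) (hτ : ∀ x, τ x - x ∈ 𝔮) :
    ∀ x, (σ * τ) x - x ∈ 𝔮 := by
  intro x
  have h : (σ * τ) x - x = (σ (τ x) - τ x) + (τ x - x) := by
    rw [AlgEquiv.mul_apply]; ring
  rw [h]; exact add_mem (hσ _) (hτ _)

lemma pow_inert {σ : O ≃ₐ[R] O} (hσ : ∀ x, σ x - x ∈ 𝔮) (k : ℕ) :
    ∀ x, (σ ^ k) x - x ∈ 𝔮 := by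
  induction k with
  | zero => intro x; simp
  | succ n ih => rw [pow_succ]; exact mul_inert 𝔮 ih hσ

/-- The inertia subgroup. -/
def inertSub : Subgroup (O ≃ₐ[R] O) where
  carrier := {σ | ∀ x, σ x - x ∈ 𝔮}
  one_mem' := by intro x; simp
  mul_mem' := fun ha hb => mul_inert 𝔮 ha hb
  inv_mem' := fun ha => inv_inert 𝔮 ha

lemma stab_map {σ : O ≃ₐ[R] O} (hσ : ∀ x, σ x - x ∈ 𝔮) : Ideal.map σ 𝔮 = 𝔮 := by
  have hle : ∀ (ρ : O ≃ₐ[R] O), (∀ x, ρ x - x ∈ 𝔮) → Ideal.map ρ 𝔮 ≤ 𝔮 := by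
    intro ρ hρ
    rw [Ideal.map_le_iff_le_comap]
    intro x hx
    have h : ρ x = (ρ x - x) + x := by ring
    simp only [Ideal.mem_comap]
    rw [h]; exact add_mem (hρ x) hx
  refine le_antisymm (hle σ hσ) ?_
  intro x hx
  have h1 : σ⁻¹ x ∈ 𝔮 := hle σ⁻¹ (inv_inert 𝔮 hσ) (Ideal.mem_map_of_mem _ hx)
  have h2 : σ (σ⁻¹ x) = x := σ.apply_symm_apply x
  rw [← h2]
  exact Ideal.mem_map_of_mem _ h1

lemma stab_mem_pow {σ : O ≃ₐ[R] O} (hσ : ∀ x, σ x - x ∈ 𝔮) {n : ℕ} {x : O}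
    (hx : x ∈ 𝔮 ^ n) : σ x ∈ 𝔮 ^ n := by
  have h : Ideal.map σ (𝔮 ^ n) = 𝔮 ^ n := by rw [Ideal.map_pow, stab_map 𝔮 hσ]
  rw [← h]; exact Ideal.mem_map_of_mem _ hx

lemma span_sup_eq [𝔮.IsMaximal] (h𝔮 : 𝔮 ≠ ⊥) {π : O} (hπ : π ∈ 𝔮) (hπ2 : π ∉ 𝔮 ^ 2) :
    Ideal.span {π} ⊔ 𝔮 ^ 2 = 𝔮 := by
  have hqprime : Prime 𝔮 := (Ideal.prime_iff_isPrime h𝔮).mpr inferInstance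
  have hdvd : (Ideal.span {π} ⊔ 𝔮 ^ 2) ∣ 𝔮 ^ 2 := Ideal.dvd_iff_le.mpr le_sup_right
  obtain ⟨i, hi, heq⟩ := (dvd_prime_pow hqprime 2).mp hdvd
  have heq' : Ideal.span {π} ⊔ 𝔮 ^ 2 = 𝔮 ^ i := associated_iff_eq.mp heq
  interval_cases i
  · exfalso
    have hle : Ideal.span {π} ⊔ 𝔮 ^ 2 ≤ 𝔮 :=
      sup_le ((Ideal.span_singleton_le_iff_mem 𝔮).mpr hπ) (Ideal.pow_le_self two_ne_zero)
    rw [heq', pow_zero, Ideal.one_eq_top] at hle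
    exact (Ideal.IsMaximal.ne_top ‹𝔮.IsMaximal›) (top_le_iff.mp hle)
  · rw [heq', pow_one]
  · exact absurd (heq' ▸ (le_sup_left (a := Ideal.span {π}) (b := 𝔮 ^ 2))
      (Ideal.mem_span_singleton_self π)) hπ2

lemma val_lemma [𝔮.IsMaximal] (h𝔮 : 𝔮 ≠ ⊥) {π x : O} (hπ2 : π ∉ 𝔮 ^ 2)
    (h : x * π ∈ 𝔮 ^ 2) : x ∈ 𝔮 := by
  by_contra hx
  have hqprime : Prime 𝔮 := (Ideal.prime_iff_isPrime h𝔮).mpr inferInstance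
  have h1 : 𝔮 * 𝔮 ∣ Ideal.span {x} * Ideal.span {π} := by
    rw [Ideal.span_singleton_mul_span_singleton, Ideal.dvd_span_singleton, ← pow_two]
    exact h
  have hx' : ¬ 𝔮 ∣ Ideal.span {x} := by rwa [Ideal.dvd_span_singleton]
  have h2 : 𝔮 ∣ Ideal.span {π} := by
    have hd : 𝔮 ∣ Ideal.span {x} * Ideal.span {π} := dvd_trans (Dvd.intro 𝔮 rfl) h1
    exact (hqprime.dvd_mul.mp hd).resolve_left hx'
  obtain ⟨J, hJ⟩ := h2
  have h3 : 𝔮 ∣ Ideal.span {x} * J := by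
    refine (mul_dvd_mul_iff_left hqprime.ne_zero).mp ?_
    calc 𝔮 * 𝔮 ∣ Ideal.span {x} * Ideal.span {π} := h1
    _ = 𝔮 * (Ideal.span {x} * J) := by rw [hJ]; ring
  have h4 : 𝔮 ∣ J := (hqprime.dvd_mul.mp h3).resolve_left hx'
  apply hπ2
  rw [← Ideal.dvd_span_singleton (I := 𝔮 ^ 2)] at *
  obtain ⟨J', rfl⟩ := h4
  exact ⟨J', by rw [hJ]; ring⟩

/-- Deeper-level lemma: a level-`j` element shifts `𝔮^(n+1)` by `j+1` extra. -/
lemma lemA {σ : O ≃ₐ[R] O} (hσ : ∀ x, σ x - x ∈ 𝔮) {j : ℕ}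
    (hD : ∀ x ∈ 𝔮, σ x - x ∈ 𝔮 ^ (j + 2)) :
    ∀ n, ∀ x ∈ 𝔮 ^ (n + 1), σ x - x ∈ 𝔮 ^ (n + j + 2) := by
  intro n
  induction n with
  | zero => intro x hx; simpa using hD x (by simpa using hx)
  | succ m ih =>
    intro x hx
    rw [pow_succ] at hx
    refine Submodule.mul_induction_on hx ?_ ?_
    · intro a ha b hb
      have h1 : σ (a * b) - a * b = σ a * (σ b - b) + (σ a - a) * b := by
        rw [_root_.map_mul]; ring
      rw [h1]
      refine add_mem ?_ ?_
      · have h2 : σ a ∈ 𝔮 ^ (m + 1) := stab_mem_pow 𝔮 hσ ha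
        have h3 := Ideal.mul_mem_mul h2 (hD b hb)
        rw [← pow_add] at h3
        exact Ideal.pow_le_pow_right (by omega) h3
      · have h2 := Ideal.mul_mem_mul (ih a ha) hb
        rw [← pow_succ] at h2
        exact Ideal.pow_le_pow_right (by omega) h2
    · intro u v hu hv
      have h : σ (u + v) - (u + v) = (σ u - u) + (σ v - v) := by rw [_root_.map_add]; ring
      rw [h]; exact add_mem hu hv

lemma homlem {σ τ : O ≃ₐ[R] O} (hσ : ∀ x, σ x - x ∈ 𝔮) {j : ℕ}
    (hσD : ∀ x ∈ 𝔮, σ x - x ∈ 𝔮 ^ (j + 2)) (hτD : ∀ x ∈ 𝔮, τ x - x ∈ 𝔮 ^ (j + 2)) :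
    ∀ x ∈ 𝔮, (σ * τ) x - x - ((σ x - x) + (τ x - x)) ∈ 𝔮 ^ (j + 3) := by
  intro x hx
  have hd : τ x - x ∈ 𝔮 ^ (j + 2) := hτD x hx
  have h1 : (σ * τ) x - x - ((σ x - x) + (τ x - x)) = σ (τ x - x) - (τ x - x) := by
    rw [AlgEquiv.mul_apply, _root_.map_sub]; ring
  rw [h1]
  have h2 := lemA 𝔮 hσ hσD (j + 1) (τ x - x) (by simpa using hd)
  exact Ideal.pow_le_pow_right (by omega) h2

lemma Dmul {σ τ : O ≃ₐ[R] O} (hσ : ∀ x, σ x - x ∈ 𝔮) {j : ℕ}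
    (hσD : ∀ x ∈ 𝔮, σ x - x ∈ 𝔮 ^ (j + 2)) (hτD : ∀ x ∈ 𝔮, τ x - x ∈ 𝔮 ^ (j + 2)) :
    ∀ x ∈ 𝔮, (σ * τ) x - x ∈ 𝔮 ^ (j + 2) := by
  intro x hx
  have h1 := homlem 𝔮 hσ hσD hτD x hx
  have h2 : (σ * τ) x - x =
      ((σ * τ) x - x - ((σ x - x) + (τ x - x))) + ((σ x - x) + (τ x - x)) := by ring
  rw [h2]
  exact add_mem (Ideal.pow_le_pow_right (by omega) h1) (add_mem (hσD x hx) (hτD x hx))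

lemma Dpow {σ : O ≃ₐ[R] O} (hσ : ∀ x, σ x - x ∈ 𝔮) {j : ℕ}
    (hσD : ∀ x ∈ 𝔮, σ x - x ∈ 𝔮 ^ (j + 2)) (k : ℕ) :
    ∀ x ∈ 𝔮, (σ ^ k) x - x ∈ 𝔮 ^ (j + 2) := by
  induction k with
  | zero => intro x hx; simp
  | succ m ih =>
    intro x hx
    have h := Dmul 𝔮 hσ hσD ih x hx
    rwa [← pow_succ'] at h

lemma Dpowcong {σ : O ≃ₐ[R] O} (hσ : ∀ x, σ x - x ∈ 𝔮) {j : ℕ}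
    (hσD : ∀ x ∈ 𝔮, σ x - x ∈ 𝔮 ^ (j + 2)) (k : ℕ) :
    ∀ x ∈ 𝔮, (σ ^ k) x - x - (k : O) * (σ x - x) ∈ 𝔮 ^ (j + 3) := by
  induction k with
  | zero => intro x hx; simp
  | succ m ih =>
    intro x hx
    have h1 := homlem 𝔮 hσ hσD (Dpow 𝔮 hσ hσD m) x hx
    have h2 : (σ ^ (m + 1)) x - x - ((m : O) + 1) * (σ x - x) =
        ((σ * σ ^ m) x - x - ((σ x - x) + ((σ ^ m) x - x)))
          + ((σ ^ m) x - x - (m : O) * (σ x - x)) := by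
      rw [pow_succ']; ring
    push_cast
    rw [h2]
    exact add_mem h1 (ih x hx)

lemma Dpsucc {σ : O ≃ₐ[R] O} (hσ : ∀ x, σ x - x ∈ 𝔮) {j p : ℕ}
    (hp𝔮 : (p : O) ∈ 𝔮)
    (hσD : ∀ x ∈ 𝔮, σ x - x ∈ 𝔮 ^ (j + 2)) :
    ∀ x ∈ 𝔮, (σ ^ p) x - x ∈ 𝔮 ^ (j + 3) := by
  intro x hx
  have h1 := Dpowcong 𝔮 hσ hσD p x hx
  have h2 : (σ ^ p) x - x = ((σ ^ p) x - x - (p : O) * (σ x - x)) + (p : O) * (σ x - x) := by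
    ring
  rw [h2]
  refine add_mem h1 ?_
  have h3 := Ideal.mul_mem_mul hp𝔮 (hσD x hx)
  rwa [← pow_succ'] at h3

lemma Dstart {σ : O ≃ₐ[R] O} [𝔮.IsMaximal] (h𝔮 : 𝔮 ≠ ⊥) {π : O}
    (hπ : π ∈ 𝔮) (hπ2 : π ∉ 𝔮 ^ 2)
    (hσ : ∀ x, σ x - x ∈ 𝔮) (hσπ : σ π - π ∈ 𝔮 ^ 2) :
    ∀ x ∈ 𝔮, σ x - x ∈ 𝔮 ^ 2 := by
  intro x hx
  rw [← span_sup_eq 𝔮 h𝔮 hπ hπ2] at hx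
  obtain ⟨t, ht, y, hy, rfl⟩ := Submodule.mem_sup.mp hx
  obtain ⟨c, rfl⟩ := Ideal.mem_span_singleton'.mp ht
  have h1 : σ (c * π + y) - (c * π + y) =
      σ c * (σ π - π) + (σ c - c) * π + (σ y - y) := by
    rw [_root_.map_add, _root_.map_mul]; ring
  rw [h1]
  refine add_mem (add_mem ?_ ?_) ?_
  · exact Ideal.mul_mem_left _ _ hσπ
  · have := Ideal.mul_mem_mul (hσ c) hπ
    rwa [← pow_two] at this
  · exact sub_mem (stab_mem_pow 𝔮 hσ hy) hy

end Basic

section Wild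

variable {K L : Type*} [Field K] [Field L] [NumberField K] [NumberField L]
  [Algebra K L] [IsGalois K L]

theorem wild_dvd (𝔭 : Ideal (𝓞 K)) (𝔮 : Ideal (𝓞 L)) [𝔭.IsMaximal] [𝔮.IsMaximal]
    (h𝔮 : 𝔮 ≠ ⊥) (hover : Ideal.comap (algebraMap (𝓞 K) (𝓞 L)) 𝔮 = 𝔭)
    (τ : (𝓞 L) ≃ₐ[𝓞 K] (𝓞 L)) (hτ : ∀ x, τ x - x ∈ 𝔮)
    (hord : orderOf τ = ringChar ((𝓞 K) ⧸ 𝔭)) :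
    ringChar ((𝓞 K) ⧸ 𝔭) ∣ Ideal.ramificationIdx' 𝔭 𝔮 := by
  classical
  set p := ringChar ((𝓞 K) ⧸ 𝔭) with hp
  have h𝔭 : 𝔭 ≠ ⊥ := by
    intro hbot
    exact h𝔮 (Ideal.eq_bot_of_comap_eq_bot (by rw [hover, hbot]))
  haveI hfinKp : Finite ((𝓞 K) ⧸ 𝔭) := by
    refine (Ideal.absNorm_ne_zero_iff 𝔭).mp ?_
    simpa [Ideal.absNorm_eq_zero_iff] using h𝔭
  haveI : CharP ((𝓞 K) ⧸ 𝔭) p := hp ▸ ringChar.charP _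
  have pp : p.Prime := by
    haveI := Fintype.ofFinite ((𝓞 K) ⧸ 𝔭)
    exact CharP.char_is_prime ((𝓞 K) ⧸ 𝔭) p
  -- translate τ to a field automorphism
  set e := galRestrict (𝓞 K) K L (𝓞 L) with he
  set σL : L ≃ₐ[K] L := e.symm τ with hσL
  have hτe : e σL = τ := e.apply_symm_apply τ
  set H : Subgroup (L ≃ₐ[K] L) := Subgroup.zpowers σL with hH
  set F : IntermediateField K L := IntermediateField.fixedField H with hF
  have hoσ : orderOf σL = p := by
    rw [hσL, ← hord]
    exact orderOf_injective e.symm.toMonoidHom e.symm.injective τ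
  have hrankFL : Module.finrank F L = p := by
    rw [hF, IntermediateField.finrank_fixedField_eq_card,
      hH, Nat.card_zpowers, hoσ]
  -- the inertia subgroup and the cyclic subgroup generated by τ
  set T : Subgroup ((𝓞 L) ≃ₐ[𝓞 K] (𝓞 L)) := Subgroup.zpowers τ with hT
  have hTle : T ≤ inertSub 𝔮 := Subgroup.zpowers_le.mpr hτ
  have hTS : ∀ (σ : T) (x : 𝓞 L), (σ : (𝓞 L) ≃ₐ[𝓞 K] (𝓞 L)) x - x ∈ 𝔮 :=
    fun σ => hTle σ.2
  have hcardT : Nat.card T = p := by rw [hT, Nat.card_zpowers, hord]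
  -- norm map
  set Na : 𝓞 L → 𝓞 L := fun x => ∏ σ : T, (σ : (𝓞 L) ≃ₐ[𝓞 K] (𝓞 L)) x with hNa
  set τt : T := ⟨τ, Subgroup.mem_zpowers τ⟩ with hτt
  have hNafix : ∀ x, τ (Na x) = Na x := by
    intro x
    rw [hNa]
    simp only
    rw [map_prod]
    exact Fintype.prod_equiv (Equiv.mulLeft τt)
      (fun σ => ((τt * σ : T) : (𝓞 L) ≃ₐ[𝓞 K] (𝓞 L)) x)
      (fun σ => (σ : (𝓞 L) ≃ₐ[𝓞 K] (𝓞 L)) x) (fun σ => rfl)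
  have hNamem : ∀ (x : 𝓞 L) (Q : Ideal (𝓞 L)), x ∈ Q → Na x ∈ Q := by
    intro x Q hx
    have h1 : Na x = ((1 : T) : (𝓞 L) ≃ₐ[𝓞 K] (𝓞 L)) x *
        ∏ σ ∈ Finset.univ.erase (1 : T), (σ : (𝓞 L) ≃ₐ[𝓞 K] (𝓞 L)) x :=
      (Finset.mul_prod_erase _ _ (Finset.mem_univ _)).symm
    rw [h1]
    exact Ideal.mul_mem_right _ _ (by simpa using hx)
  -- fixed elements come from 𝓞 F
  have hfixOF : ∀ x : 𝓞 L, τ x = x → ∃ y : 𝓞 F, algebraMap (𝓞 F) (𝓞 L) y = x := by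
    intro x hx
    set xL : L := algebraMap (𝓞 L) L x with hxL
    have hσLx : σL xL = xL := by
      have h1 := algebraMap_galRestrict_apply (𝓞 K) σL x
      rw [← he, hτe, hx] at h1
      exact h1.symm
    have hstab : ∀ g ∈ H, g • xL = xL := by
      have hle : H ≤ MulAction.stabilizer (L ≃ₐ[K] L) xL :=
        Subgroup.zpowers_le.mpr (by rw [MulAction.mem_stabilizer_iff]; exact hσLx)
      intro g hg
      exact MulAction.mem_stabilizer_iff.mp (hle hg)
    have hmemF : xL ∈ F := by
      show xL ∈ IntermediateField.fixedField H
      exact fun g => hstab g.1 g.2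
    have hint : IsIntegral ℤ (⟨xL, hmemF⟩ : F) := by
      rw [← isIntegral_algebraMap_iff (B := L) (algebraMap F L).injective]
      show IsIntegral ℤ xL
      rw [hxL]
      exact (IsIntegralClosure.isIntegral ℤ L x).algebraMap
    refine ⟨⟨⟨xL, hmemF⟩, (mem_integralClosure_iff ℤ F).mpr hint⟩, ?_⟩
    have hinj : Function.Injective (algebraMap (𝓞 L) L) := IsFractionRing.injective _ _
    apply hinj
    rfl
  -- the prime below
  set 𝔯 : Ideal (𝓞 F) := 𝔮.under (𝓞 F) with h𝔯def
  haveI h𝔯m : 𝔯.IsMaximal := Ideal.IsMaximal.under (𝓞 F) 𝔮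
  have h𝔯 : 𝔯 ≠ ⊥ := by
    intro hbot
    exact h𝔮 (Ideal.eq_bot_of_comap_eq_bot (R := 𝓞 F) hbot)
  have hinjFL : Function.Injective (algebraMap (𝓞 F) (𝓞 L)) :=
    FaithfulSMul.algebraMap_injective _ _
  -- uniqueness of the prime above 𝔯
  have huniq : ∀ Q : Ideal (𝓞 L), Q.IsPrime → Q.under (𝓞 F) = 𝔯 → Q = 𝔮 := by
    intro Q hQ hQu
    have hQle : Q ≤ 𝔮 := by
      intro x hx
      obtain ⟨y, hy⟩ := hfixOF _ (hNafix x)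
      have h3 : y ∈ 𝔯 := by
        rw [← hQu]
        show algebraMap (𝓞 F) (𝓞 L) y ∈ Q
        rw [hy]
        exact hNamem x Q hx
      have h4 : Na x ∈ 𝔮 := by
        have h5 : algebraMap (𝓞 F) (𝓞 L) y ∈ 𝔮 := h3
        rwa [hy] at h5
      obtain ⟨σ, -, hσx⟩ := (Ideal.IsPrime.prod_mem_iff).mp h4
      have h6 : x = (σ : (𝓞 L) ≃ₐ[𝓞 K] (𝓞 L)) x - ((σ : (𝓞 L) ≃ₐ[𝓞 K] (𝓞 L)) x - x) := by
        ring
      rw [h6]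
      exact sub_mem hσx (hTS σ x)
    haveI : Q.LiesOver 𝔯 := ⟨hQu.symm⟩
    haveI hQm : Q.IsMaximal := Ideal.IsMaximal.of_liesOver_isMaximal Q 𝔯
    exact hQm.eq_of_le (Ideal.IsMaximal.ne_top ‹𝔮.IsMaximal›) hQle
  -- counting
  have hmapne : Ideal.map (algebraMap (𝓞 F) (𝓞 L)) 𝔯 ≠ ⊥ := by
    rw [Ne, Ideal.map_eq_bot_iff_of_injective hinjFL]
    exact h𝔯
  have hsum := Ideal.sum_ramification_inertia (R := 𝓞 F) (S := 𝓞 L) (p := 𝔯) F L h𝔯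
  have hfac : (UniqueFactorizationMonoid.factors
      (Ideal.map (algebraMap (𝓞 F) (𝓞 L)) 𝔯)).toFinset = {𝔮} := by
    ext Q
    simp only [Multiset.mem_toFinset, Finset.mem_singleton]
    constructor
    · intro hQ
      rw [UniqueFactorizationMonoid.factors_eq_normalizedFactors] at hQ
      obtain ⟨hQp, hQle⟩ := (Ideal.mem_normalizedFactors_iff hmapne).mp hQ
      refine huniq Q hQp ?_
      have h1 : 𝔯 ≤ Ideal.comap (algebraMap (𝓞 F) (𝓞 L)) Q := Ideal.map_le_iff_le_comap.mp hQle
      have h2 : Ideal.comap (algebraMap (𝓞 F) (𝓞 L)) Q ≠ ⊤ :=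
        Ideal.comap_ne_top _ hQp.ne_top
      exact (h𝔯m.eq_of_le h2 h1).symm
    · rintro rfl
      rw [UniqueFactorizationMonoid.factors_eq_normalizedFactors]
      exact (Ideal.mem_normalizedFactors_iff hmapne).mpr
        ⟨inferInstance, Ideal.map_le_iff_le_comap.mpr le_rfl⟩
  rw [show IsDedekindDomain.primesOverFinset 𝔯 (𝓞 L) = {𝔮} from hfac, Finset.sum_singleton] at hsum
  -- residue degree is 1
  haveI : 𝔮.LiesOver 𝔭 := ⟨hover.symm⟩
  have hinjq : Function.Injective (algebraMap ((𝓞 K) ⧸ 𝔭) ((𝓞 L) ⧸ 𝔮)) :=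
    FaithfulSMul.algebraMap_injective ((𝓞 K) ⧸ 𝔭) ((𝓞 L) ⧸ 𝔮)
  haveI : CharP ((𝓞 L) ⧸ 𝔮) p := charP_of_injective_algebraMap hinjq p
  haveI : Finite ((𝓞 L) ⧸ 𝔮) := by
    refine (Ideal.absNorm_ne_zero_iff 𝔮).mp ?_
    simpa [Ideal.absNorm_eq_zero_iff] using h𝔮
  haveI : ExpChar ((𝓞 L) ⧸ 𝔮) p := ExpChar.prime pp
  have hfrob : Function.Surjective (frobenius ((𝓞 L) ⧸ 𝔮) p) := surjective_frobenius _ p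
  have hsurj : Function.Surjective (algebraMap ((𝓞 F) ⧸ 𝔯) ((𝓞 L) ⧸ 𝔮)) := by
    intro β
    obtain ⟨α, hα⟩ := hfrob β
    obtain ⟨a, rfl⟩ := Ideal.Quotient.mk_surjective α
    have hNaim : Ideal.Quotient.mk 𝔮 (Na a) = (Ideal.Quotient.mk 𝔮 a) ^ p := by
      rw [hNa]
      simp only
      rw [map_prod]
      rw [Finset.prod_congr rfl (fun (σ : T) _ =>
        (Ideal.Quotient.mk_eq_mk_iff_sub_mem _ _).mpr (hTS σ a)), Finset.prod_const,
        Finset.card_univ, ← Nat.card_eq_fintype_card, hcardT]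
    obtain ⟨y, hy⟩ := hfixOF (Na a) (hNafix a)
    refine ⟨Ideal.Quotient.mk 𝔯 y, ?_⟩
    have hcomm : algebraMap ((𝓞 F) ⧸ 𝔯) ((𝓞 L) ⧸ 𝔮) (Ideal.Quotient.mk 𝔯 y)
        = Ideal.Quotient.mk 𝔮 (algebraMap (𝓞 F) (𝓞 L) y) := rfl
    rw [hcomm, hy, hNaim, ← hα, frobenius_def]
  have hinjr : Function.Injective (algebraMap ((𝓞 F) ⧸ 𝔯) ((𝓞 L) ⧸ 𝔮)) :=
    FaithfulSMul.algebraMap_injective ((𝓞 F) ⧸ 𝔯) ((𝓞 L) ⧸ 𝔮)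
  have hf1 : Ideal.inertiaDeg' 𝔯 𝔮 = 1 := by
    rw [Ideal.inertiaDeg'_algebraMap]
    have hbij : Function.Bijective (algebraMap ((𝓞 F) ⧸ 𝔯) ((𝓞 L) ⧸ 𝔮)) := ⟨hinjr, hsurj⟩
    have h1 := (LinearEquiv.ofBijective (Algebra.linearMap ((𝓞 F) ⧸ 𝔯) ((𝓞 L) ⧸ 𝔮))
      hbij).finrank_eq
    rw [← h1, Module.finrank_self]
  rw [hf1, mul_one, hrankFL] at hsum
  -- tower
  have hfg : Ideal.map (algebraMap (𝓞 K) (𝓞 L)) 𝔭 ≠ ⊥ := by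
    rw [Ne, Ideal.map_eq_bot_iff_of_injective
      (FaithfulSMul.algebraMap_injective (𝓞 K) (𝓞 L))]
    exact h𝔭
  have hg : Ideal.map (algebraMap (𝓞 F) (𝓞 L)) 𝔯 ≤ 𝔮 := Ideal.map_le_iff_le_comap.mpr le_rfl
  have htower := Ideal.ramificationIdx'_algebra_tower (R := 𝓞 K) (S := 𝓞 F) (T := 𝓞 L)
      (p := 𝔭) (P := 𝔯) (Q := 𝔮) hmapne hfg hg
  rw [hsum] at htower
  exact ⟨Ideal.ramificationIdx' 𝔭 𝔯, by rw [htower, mul_comm]⟩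

theorem rho_eq_one (𝔭 : Ideal (𝓞 K)) (𝔮 : Ideal (𝓞 L)) [𝔭.IsMaximal] [𝔮.IsMaximal]
    (h𝔮 : 𝔮 ≠ ⊥) (hover : Ideal.comap (algebraMap (𝓞 K) (𝓞 L)) 𝔮 = 𝔭)
    (htame : ¬ (ringChar ((𝓞 K) ⧸ 𝔭) ∣ Ideal.ramificationIdx' 𝔭 𝔮))
    {π : 𝓞 L} (hπ : π ∈ 𝔮) (hπ2 : π ∉ 𝔮 ^ 2)
    (ρ : (𝓞 L) ≃ₐ[𝓞 K] (𝓞 L)) (hρ : ∀ x, ρ x - x ∈ 𝔮) (hρπ : ρ π - π ∈ 𝔮 ^ 2) : ρ = 1 := by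
  classical
  set p := ringChar ((𝓞 K) ⧸ 𝔭) with hp
  have h𝔭 : 𝔭 ≠ ⊥ := fun hbot => h𝔮 (Ideal.eq_bot_of_comap_eq_bot (by rw [hover, hbot]))
  haveI : Finite ((𝓞 K) ⧸ 𝔭) :=
    (Ideal.absNorm_ne_zero_iff 𝔭).mp (by simpa [Ideal.absNorm_eq_zero_iff] using h𝔭)
  haveI : CharP ((𝓞 K) ⧸ 𝔭) p := hp ▸ ringChar.charP _
  have pp : p.Prime := by
    haveI := Fintype.ofFinite ((𝓞 K) ⧸ 𝔭)
    exact CharP.char_is_prime ((𝓞 K) ⧸ 𝔭) p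
  haveI : 𝔮.LiesOver 𝔭 := ⟨hover.symm⟩
  haveI : CharP ((𝓞 L) ⧸ 𝔮) p :=
    charP_of_injective_algebraMap (FaithfulSMul.algebraMap_injective ((𝓞 K) ⧸ 𝔭) ((𝓞 L) ⧸ 𝔮)) p
  have hpq : (p : 𝓞 L) ∈ 𝔮 := by
    rw [← Ideal.Quotient.eq_zero_iff_mem, map_natCast]
    exact CharP.cast_eq_zero _ p
  set m := orderOf ρ with hm
  have hm0 : 0 < m := orderOf_pos ρ
  by_cases hdvd : p ∣ m
  · exfalso
    set τ := ρ ^ (m / p) with hτdef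
    have hτS : ∀ x, τ x - x ∈ 𝔮 := pow_inert 𝔮 hρ (m / p)
    have hτord : orderOf τ = p := by
      rw [hτdef, orderOf_pow, ← hm, Nat.gcd_eq_right (Nat.div_dvd_of_dvd hdvd),
        Nat.div_div_self hdvd hm0.ne']
    exact htame (wild_dvd 𝔭 𝔮 h𝔮 hover τ hτS hτord)
  · have hcop : Nat.Coprime p m := (Nat.Prime.coprime_iff_not_dvd pp).mpr hdvd
    have hD1 : ∀ x ∈ 𝔮, ρ x - x ∈ 𝔮 ^ 2 := Dstart 𝔮 h𝔮 hπ hπ2 hρ hρπ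
    have hDn : ∀ n : ℕ, ∀ x ∈ 𝔮, (ρ ^ p ^ n) x - x ∈ 𝔮 ^ (n + 2) := by
      intro n
      induction n with
      | zero => simpa using hD1
      | succ k ih =>
        intro x hx
        have h1 : ρ ^ p ^ (k + 1) = (ρ ^ p ^ k) ^ p := by rw [← pow_mul, pow_succ]
        rw [h1]
        exact Dpsucc 𝔮 (pow_inert 𝔮 hρ _) hpq ih x hx
    have hfix : ∀ x ∈ 𝔮, ρ x = x := by
      intro x hx
      have hin : ρ x - x ∈ ⨅ i : ℕ, 𝔮 ^ i := by
        refine (Submodule.mem_iInf _).mpr ?_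
        intro i
        set t := Nat.totient m with ht
        have ht0 : 0 < t := Nat.totient_pos.mpr hm0
        have hmodeq : p ^ (t * i) ≡ 1 [MOD m] := by
          rw [pow_mul]
          calc (p ^ t) ^ i ≡ 1 ^ i [MOD m] := (Nat.ModEq.pow_totient hcop).pow i
          _ = 1 := one_pow i
        have hpow : ρ ^ p ^ (t * i) = ρ := by
          conv_rhs => rw [← pow_one ρ]
          exact pow_eq_pow_iff_modEq.mpr (by rw [← hm]; exact hmodeq)
        have h2 := hDn (t * i) x hx
        rw [hpow] at h2
        refine Ideal.pow_le_pow_right ?_ h2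
        have h3 : i ≤ t * i := Nat.le_mul_of_pos_left i ht0
        omega
      rw [Ideal.iInf_pow_eq_bot_of_isDomain 𝔮 (Ideal.IsMaximal.ne_top ‹𝔮.IsMaximal›),
        Ideal.mem_bot] at hin
      exact sub_eq_zero.mp hin
    have hπ0 : π ≠ 0 := fun h0 => hπ2 (h0 ▸ zero_mem _)
    refine AlgEquiv.ext fun x => ?_
    show ρ x = x
    have h1 : ρ (x * π) = x * π := hfix _ (Ideal.mul_mem_left 𝔮 x hπ)
    rw [_root_.map_mul, hfix π hπ] at h1
    exact mul_right_cancel₀ hπ0 h1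

end Wild

end Stmt7Aux

theorem stmt_7 {K L : Type*} [Field K] [Field L] [NumberField K] [NumberField L]
    [Algebra K L] [IsGalois K L]
    (𝔭 : Ideal (𝓞 K)) (𝔮 : Ideal (𝓞 L)) [𝔭.IsMaximal] [𝔮.IsMaximal] (h𝔮 : 𝔮 ≠ ⊥)
    (hover : Ideal.comap (algebraMap (𝓞 K) (𝓞 L)) 𝔮 = 𝔭)
    (htame : ¬ (ringChar ((𝓞 K) ⧸ 𝔭) ∣
      Ideal.ramificationIdx' 𝔭 𝔮))
    (π : 𝓞 L) (hπ : π ∈ 𝔮) (hπ2 : π ∉ 𝔮 ^ 2) :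
    -- the inertia group, realized as automorphisms σ of `𝓞 L` over `𝓞 K` with
    -- σ(x) ≡ x mod 𝔮 for all x, admits an injective group homomorphism θ into
    -- ((𝓞 L)/𝔮)ˣ, where θ(σ) is the class of σ(π)/π, characterized by
    -- σ(π) ≡ c·π mod 𝔮² for any lift c of θ(σ).
    ∃ θ : {σ : (𝓞 L) ≃ₐ[𝓞 K] (𝓞 L) // ∀ x : 𝓞 L, σ x - x ∈ 𝔮} → ((𝓞 L) ⧸ 𝔮)ˣ,
      Function.Injective θ ∧
      (∀ σ τ : {σ : (𝓞 L) ≃ₐ[𝓞 K] (𝓞 L) // ∀ x : 𝓞 L, σ x - x ∈ 𝔮},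
        ∀ h : ∀ x : 𝓞 L, (σ.1 * τ.1) x - x ∈ 𝔮, θ ⟨σ.1 * τ.1, h⟩ = θ σ * θ τ) ∧
      (∀ σ : {σ : (𝓞 L) ≃ₐ[𝓞 K] (𝓞 L) // ∀ x : 𝓞 L, σ x - x ∈ 𝔮},
        ∀ c : 𝓞 L, Ideal.Quotient.mk 𝔮 c = (θ σ : (𝓞 L) ⧸ 𝔮) →
          σ.1 π - c * π ∈ 𝔮 ^ 2) := by
  classical
  have hex : ∀ σ : {σ : (𝓞 L) ≃ₐ[𝓞 K] (𝓞 L) // ∀ x : 𝓞 L, σ x - x ∈ 𝔮},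
      ∃ c : 𝓞 L, σ.1 π - c * π ∈ 𝔮 ^ 2 := by
    intro σ
    have h1 : σ.1 π ∈ Ideal.span {π} ⊔ 𝔮 ^ 2 := by
      rw [Stmt7Aux.span_sup_eq 𝔮 h𝔮 hπ hπ2]
      have h0 : σ.1 π ∈ 𝔮 ^ 1 := Stmt7Aux.stab_mem_pow 𝔮 σ.2 (n := 1) (by simpa using hπ)
      simpa using h0
    obtain ⟨t, ht, y, hy, hsum⟩ := Submodule.mem_sup.mp h1
    obtain ⟨c, rfl⟩ := Ideal.mem_span_singleton'.mp ht
    refine ⟨c, ?_⟩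
    rw [← hsum]
    simpa using hy
  choose c hc using hex
  have huc : ∀ σ (d : 𝓞 L), σ.1 π - d * π ∈ 𝔮 ^ 2 →
      Ideal.Quotient.mk 𝔮 d = Ideal.Quotient.mk 𝔮 (c σ) := by
    intro σ d hd
    rw [Ideal.Quotient.mk_eq_mk_iff_sub_mem]
    have h2 := sub_mem (hc σ) hd
    have h3 : (σ.1 π - c σ * π) - (σ.1 π - d * π) = (d - c σ) * π := by ring
    rw [h3] at h2
    exact Stmt7Aux.val_lemma 𝔮 h𝔮 hπ2 h2
  have hchar : ∀ σ (d : 𝓞 L), Ideal.Quotient.mk 𝔮 d = Ideal.Quotient.mk 𝔮 (c σ) →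
      σ.1 π - d * π ∈ 𝔮 ^ 2 := by
    intro σ d hd
    have h1 : d - c σ ∈ 𝔮 := (Ideal.Quotient.mk_eq_mk_iff_sub_mem _ _).mp hd
    have h2 : σ.1 π - d * π = (σ.1 π - c σ * π) + (-(d - c σ)) * π := by ring
    rw [h2]
    refine add_mem (hc σ) ?_
    have h3 := Ideal.mul_mem_mul (neg_mem h1) hπ
    rwa [← pow_two] at h3
  have hcu : ∀ σ, IsUnit (Ideal.Quotient.mk 𝔮 (c σ)) := by
    intro σ
    have hcnot : c σ ∉ 𝔮 := ?_
    · have hne : Ideal.Quotient.mk 𝔮 (c σ) ≠ 0 := fun hz =>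
        hcnot (Ideal.Quotient.eq_zero_iff_mem.mp hz)
      obtain ⟨b, hb⟩ := Ideal.Quotient.exists_inv hne
      exact IsUnit.of_mul_eq_one b hb
    intro h0
    have h1 : σ.1 π ∈ 𝔮 ^ 2 := by
      have h2 : σ.1 π = (σ.1 π - c σ * π) + c σ * π := by ring
      rw [h2]
      refine add_mem (hc σ) ?_
      have h3 := Ideal.mul_mem_mul h0 hπ
      rwa [← pow_two] at h3
    apply hπ2
    have h4 : σ.1⁻¹ (σ.1 π) = π := σ.1.symm_apply_apply π
    rw [← h4]
    exact Stmt7Aux.stab_mem_pow 𝔮 (Stmt7Aux.inv_inert 𝔮 σ.2) h1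
  refine ⟨fun σ => (hcu σ).unit, ?_, ?_, ?_⟩
  · -- injectivity
    intro σ τ h
    have hvals : Ideal.Quotient.mk 𝔮 (c σ) = Ideal.Quotient.mk 𝔮 (c τ) := by
      have := congrArg Units.val h
      rwa [(hcu σ).unit_spec, (hcu τ).unit_spec] at this
    have hd : σ.1 π - c τ * π ∈ 𝔮 ^ 2 := hchar σ (c τ) hvals.symm
    have hsub : σ.1 π - τ.1 π ∈ 𝔮 ^ 2 := by
      have h1 := sub_mem hd (hc τ)
      have h2 : (σ.1 π - c τ * π) - (τ.1 π - c τ * π) = σ.1 π - τ.1 π := by ring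
      rwa [h2] at h1
    set ρ := τ.1⁻¹ * σ.1 with hρdef
    have hρS : ∀ x, ρ x - x ∈ 𝔮 := Stmt7Aux.mul_inert 𝔮 (Stmt7Aux.inv_inert 𝔮 τ.2) σ.2
    have hρπ : ρ π - π ∈ 𝔮 ^ 2 := by
      have h6 : τ.1⁻¹ (τ.1 π) = π := τ.1.symm_apply_apply π
      have h5 : ρ π - π = τ.1⁻¹ (σ.1 π - τ.1 π) := by
        rw [hρdef, AlgEquiv.mul_apply, _root_.map_sub, h6]
      rw [h5]
      exact Stmt7Aux.stab_mem_pow 𝔮 (Stmt7Aux.inv_inert 𝔮 τ.2) hsub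
    have hρ1 : ρ = 1 := Stmt7Aux.rho_eq_one 𝔭 𝔮 h𝔮 hover htame hπ hπ2 ρ hρS hρπ
    have h7 : τ.1 = σ.1 := inv_mul_eq_one.mp hρ1
    exact Subtype.ext h7.symm
  · -- multiplicativity
    intro σ τ h
    have key : (σ.1 * τ.1) π - (c σ * c τ) * π ∈ 𝔮 ^ 2 := by
      have h1 : (σ.1 * τ.1) π - (c σ * c τ) * π =
          σ.1 (τ.1 π - c τ * π) + σ.1 (c τ) * (σ.1 π - c σ * π)
            + (c σ * π) * (σ.1 (c τ) - c τ) := by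
        rw [AlgEquiv.mul_apply, _root_.map_sub, _root_.map_mul]; ring
      rw [h1]
      refine add_mem (add_mem ?_ ?_) ?_
      · exact Stmt7Aux.stab_mem_pow 𝔮 σ.2 (hc τ)
      · exact Ideal.mul_mem_left _ _ (hc σ)
      · have h2 := Ideal.mul_mem_mul (Ideal.mul_mem_left 𝔮 (c σ) hπ) (σ.2 (c τ))
        rwa [← pow_two] at h2
    have h2 := huc ⟨σ.1 * τ.1, h⟩ (c σ * c τ) key
    apply Units.ext
    show Ideal.Quotient.mk 𝔮 (c ⟨σ.1 * τ.1, h⟩) = ((hcu σ).unit * (hcu τ).unit : ((𝓞 L) ⧸ 𝔮)ˣ)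
    rw [Units.val_mul, (hcu σ).unit_spec, (hcu τ).unit_spec, ← _root_.map_mul, h2]
  · -- characterization
    intro σ d hd
    exact hchar σ d (hd.trans (hcu σ).unit_spec)
end

section
/- Let m ≥ 2, let ζ be a primitive 2^m-th root of unity, and let σ be the nontrivial element of Gal(Q(ζ_{2^m})/Q(ζ_{2^{m-1}})); so σ(ζ) = −ζ. Then for every x ∈ Z[ζ] and every place v of Q(ζ_{2^m}) lying over 2, one has |σ(x)² − x²|_v ≤ 1/4. -/
/-- If `u ^ k` grows at most linearly in `k`, then `u ≤ 1`. -/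
lemma aux_pow_le_linear (u c d : ℝ) (hu : 0 ≤ u) (hc : 0 ≤ c) (hd : 0 ≤ d)
    (h : ∀ k : ℕ, 1 ≤ k → u ^ k ≤ c * k + d) : u ≤ 1 := by
  by_contra h1
  push_neg at h1
  set t := u - 1 with ht
  have ht0 : 0 < t := by simp only [ht]; linarith
  obtain ⟨k, hk⟩ := exists_nat_gt ((2 * c + d) / t ^ 2)
  have hk1 : 1 ≤ k := by
    rcases Nat.eq_zero_or_pos k with h0 | h0
    · exfalso
      have : 0 ≤ (2 * c + d) / t ^ 2 := by positivity
      rw [h0] at hk; push_cast at hk; linarith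
    · exact h0
  have hb : 1 + (k : ℝ) * t ≤ u ^ k := by
    have := one_add_mul_le_pow (by linarith : (-2 : ℝ) ≤ t) k
    have hu1 : (1 : ℝ) + t = u := by simp [ht]
    rwa [hu1] at this
  have h2k := h (2 * k) (by omega)
  have hkt : 2 * c + d < k * t ^ 2 := by
    rw [div_lt_iff₀ (by positivity)] at hk; linarith
  have hpw : u ^ (2 * k) = (u ^ k) ^ 2 := by rw [← pow_mul, mul_comm]
  have hk1' : (1 : ℝ) ≤ k := by exact_mod_cast hk1
  have hkt0 : 0 < (k : ℝ) * t := by positivity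
  have h3 : ((k : ℝ) * t) ^ 2 ≤ u ^ (2 * k) := by
    rw [hpw]; nlinarith [hb]
  have h4 : (k : ℝ) * (2 * c + d) < (k : ℝ) * ((k : ℝ) * t ^ 2) :=
    mul_lt_mul_of_pos_left hkt (by linarith)
  have hkd : d ≤ (k : ℝ) * d := by nlinarith
  push_cast at h2k
  nlinarith

section

variable {K : Type*} [Field K] (v : AbsoluteValue K ℝ)

lemma aux_nat_le_two (hv : v 2 = 1 / 2) : ∀ n : ℕ, v (n : K) ≤ 2 := by
  intro n
  induction n using Nat.strong_induction_on with
  | _ n ih =>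
    rcases Nat.eq_zero_or_pos n with h0 | h0
    · simp [h0]
    rcases Nat.lt_or_ge n 2 with h2 | h2
    · interval_cases n <;> simp
    have hrec : n = 2 * (n / 2) + n % 2 := (Nat.div_add_mod n 2).symm ▸ rfl
    have hlt : n / 2 < n := Nat.div_lt_self h0 one_lt_two
    have h1 : v ((n : K)) ≤ v ((2 : K) * (n / 2 : ℕ)) + v ((n % 2 : ℕ) : K) := by
      calc v ((n : K)) = v ((2 : K) * ((n / 2 : ℕ) : K) + ((n % 2 : ℕ) : K)) := by
            congr 1
            rw [show ((n : K)) = (((2 * (n / 2) + n % 2 : ℕ)) : K) by exact_mod_cast congrArg _ hrec]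
            push_cast
            ring
        _ ≤ _ := v.add_le _ _
    have hmod : v ((n % 2 : ℕ) : K) ≤ 1 := by
      rcases Nat.mod_two_eq_zero_or_one n with h | h <;> simp [h]
    have := ih (n / 2) hlt
    rw [v.map_mul, hv] at h1
    linarith

lemma aux_nat_le_one (hv : v 2 = 1 / 2) (n : ℕ) : v (n : K) ≤ 1 := by
  refine aux_pow_le_linear (v n) 0 2 (v.nonneg _) le_rfl (by norm_num) fun k _ => ?_
  have h : v (n : K) ^ k = v (((n ^ k : ℕ) : K)) := by
    rw [← v.map_pow]; push_cast; ring_nf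
  rw [h]
  have := aux_nat_le_two v hv (n ^ k)
  linarith

lemma aux_int_le_one (hv : v 2 = 1 / 2) (n : ℤ) : v (n : K) ≤ 1 := by
  obtain ⟨k, rfl | rfl⟩ := Int.eq_nat_or_neg n
  · exact_mod_cast aux_nat_le_one v hv k
  · push_cast
    rw [v.map_neg]
    exact aux_nat_le_one v hv k

lemma aux_aeval_le (hv : v 2 = 1 / 2) {ζ : K} (hζ1 : v ζ ≤ 1) (p : Polynomial ℤ) :
    v (Polynomial.aeval ζ p) ≤ p.natDegree + 1 := by
  rw [Polynomial.aeval_eq_sum_range]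
  calc v (∑ i ∈ Finset.range (p.natDegree + 1), p.coeff i • ζ ^ i)
      ≤ ∑ i ∈ Finset.range (p.natDegree + 1), v (p.coeff i • ζ ^ i) := v.sum_le _ _
    _ ≤ ∑ _i ∈ Finset.range (p.natDegree + 1), (1 : ℝ) := by
        refine Finset.sum_le_sum fun i _ => ?_
        rw [zsmul_eq_mul, v.map_mul, v.map_pow]
        have h1 := aux_int_le_one v hv (p.coeff i)
        have h2 : v ζ ^ i ≤ 1 := pow_le_one₀ (v.nonneg _) hζ1
        have h3 := v.nonneg ((p.coeff i : K))
        nlinarith [pow_nonneg (v.nonneg ζ) i]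
    _ = p.natDegree + 1 := by simp

lemma aux_adjoin_le_one (hv : v 2 = 1 / 2) {ζ : K} (hζ1 : v ζ ≤ 1) {y : K}
    (hy : y ∈ Algebra.adjoin ℤ {ζ}) : v y ≤ 1 := by
  rw [Algebra.adjoin_singleton_eq_range_aeval] at hy
  obtain ⟨p, hp⟩ := hy
  have hp' : Polynomial.aeval ζ p = y := hp
  refine aux_pow_le_linear (v y) p.natDegree 1 (v.nonneg _) (by positivity) zero_le_one
    fun k hk => ?_
  have hyk : y ^ k = Polynomial.aeval ζ (p ^ k) := by rw [map_pow, hp']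
  have h := aux_aeval_le v hv hζ1 (p ^ k)
  rw [← hyk] at h
  rw [Polynomial.natDegree_pow] at h
  rw [← v.map_pow]
  calc v (y ^ k) ≤ (k * p.natDegree : ℕ) + 1 := h
    _ = p.natDegree * k + 1 := by push_cast; ring

end

theorem stmt_11 (m : ℕ) (hm : 2 ≤ m)
    (ζ : CyclotomicField (2 ^ m : ℕ+) ℚ) (hζ : IsPrimitiveRoot ζ (2 ^ m))
    (σ : CyclotomicField (2 ^ m : ℕ+) ℚ ≃ₐ[ℚ] CyclotomicField (2 ^ m : ℕ+) ℚ)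
    (hσ : σ ζ = -ζ)
    (x : CyclotomicField (2 ^ m : ℕ+) ℚ) (hx : x ∈ Algebra.adjoin ℤ {ζ})
    (v : AbsoluteValue (CyclotomicField (2 ^ m : ℕ+) ℚ) ℝ) (hv : v 2 = 1 / 2) :
    v (σ x ^ 2 - x ^ 2) ≤ 1 / 4 := by
  -- v ζ ≤ 1
  have hζpow : ζ ^ (2 ^ m : ℕ) = 1 := hζ.pow_eq_one
  have hζ1 : v ζ ≤ 1 := by
    by_contra h
    push_neg at h
    have h1 : v ζ ^ (2 ^ m : ℕ) = 1 := by rw [← v.map_pow, hζpow, v.map_one]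
    have h2 : 1 < v ζ ^ (2 ^ m : ℕ) := one_lt_pow₀ h (by positivity)
    linarith
  -- key: for every y ∈ ℤ[ζ], σ y - y = 2 * c with c ∈ ℤ[ζ]
  have key : ∀ y ∈ Algebra.adjoin ℤ {ζ}, ∃ c ∈ Algebra.adjoin ℤ {ζ}, σ y - y = 2 * c := by
    intro y hy
    induction hy using Algebra.adjoin_induction with
    | mem z hz =>
        rcases hz with rfl
        exact ⟨-z, neg_mem (Algebra.subset_adjoin rfl), by rw [hσ]; ring⟩
    | algebraMap r =>
        refine ⟨0, zero_mem _, ?_⟩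
        have h : σ (algebraMap ℤ _ r) = algebraMap ℤ _ r := by
          rw [eq_intCast (algebraMap ℤ (CyclotomicField (2 ^ m : ℕ+) ℚ)) r, map_intCast]
        rw [h]; ring
    | add a b ha hb iha ihb =>
        obtain ⟨ca, hca, hca'⟩ := iha
        obtain ⟨cb, hcb, hcb'⟩ := ihb
        exact ⟨ca + cb, add_mem hca hcb, by rw [map_add]; linear_combination hca' + hcb'⟩
    | mul a b ha hb iha ihb =>
        obtain ⟨ca, hca, hca'⟩ := iha
        obtain ⟨cb, hcb, hcb'⟩ := ihb
        have h2mem : (2 : CyclotomicField (2 ^ m : ℕ+) ℚ) ∈ Algebra.adjoin ℤ {ζ} := by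
          have := Subalgebra.algebraMap_mem (Algebra.adjoin ℤ {ζ}) (2 : ℤ)
          rwa [eq_intCast, Int.cast_ofNat] at this
        refine ⟨a * cb + ca * b + 2 * (ca * cb),
          add_mem (add_mem (mul_mem ha hcb) (mul_mem hca hb))
            (mul_mem h2mem (mul_mem hca hcb)), ?_⟩
        rw [map_mul]
        linear_combination σ b * hca' + a * hcb' + 2 * ca * hcb'
  obtain ⟨c, hcmem, hc⟩ := key x hx
  have heq : σ x ^ 2 - x ^ 2 = 2 * (2 * (c * (x + c))) := by
    linear_combination (σ x + x + 2 * c) * hc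
  rw [heq, v.map_mul, v.map_mul, v.map_mul, hv]
  have h1 : v c ≤ 1 := aux_adjoin_le_one v hv hζ1 hcmem
  have h2 : v (x + c) ≤ 1 := aux_adjoin_le_one v hv hζ1 (add_mem hx hcmem)
  have h3 := v.nonneg c
  have h4 := v.nonneg (x + c)
  nlinarith
end

section
/- Let φ(x) = x² + c with c ∈ ℂ, T = (1 + √(1 + 4|c|))/2, and N ≥ 1. Then for every x ∈ ℂ, |x · φ(x) · φ²(x) ⋯ φ^N(x)| ≤ T^N (1 + |φ^N(x)|²). -/
theorem stmt_16 (c : ℂ) (T : ℝ)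
    (hT : T = (1 + Real.sqrt (1 + 4 * ‖c‖)) / 2)
    (N : ℕ) (hN : 1 ≤ N) (x : ℂ) :
    ‖∏ i ∈ Finset.range (N + 1), (fun z : ℂ => z ^ 2 + c)^[i] x‖ ≤
      T ^ N * (1 + ‖(fun z : ℂ => z ^ 2 + c)^[N] x‖ ^ 2) := by
  clear hN
  set f : ℂ → ℂ := fun z => z ^ 2 + c with hf
  have hc : 0 ≤ norm c := norm_nonneg _
  have hs : Real.sqrt (1 + 4 * norm c) ^ 2 = 1 + 4 * norm c :=
    Real.sq_sqrt (by linarith)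
  have hs1 : (1 : ℝ) ≤ Real.sqrt (1 + 4 * norm c) := by
    have h := Real.sqrt_le_sqrt (show (1:ℝ) ≤ 1 + 4 * norm c by linarith)
    rwa [Real.sqrt_one] at h
  have hT1 : (1 : ℝ) ≤ T := by rw [hT]; linarith
  have hT0 : (0 : ℝ) < T := by linarith
  have hTc : T ^ 2 = T + norm c := by
    rw [hT]; nlinarith [hs]
  -- lower bound for |f w|
  have hlow : ∀ w : ℂ, norm w ^ 2 - norm c ≤ norm (f w) := by
    intro w
    have h := norm_add_le (w ^ 2 + c) (-c)
    simp only [add_neg_cancel_right, norm_neg, norm_pow] at h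
    simp only [hf]
    linarith
  -- orbit stays ≥ T once ≥ T
  have hE : ∀ (n : ℕ) (z : ℂ), T ≤ norm z → T ≤ norm (f^[n] z) := by
    intro n
    induction n with
    | zero => intro z hz; simpa using hz
    | succ n ih =>
      intro z hz
      rw [Function.iterate_succ_apply']
      have h1 := ih z hz
      have h2 := hlow (f^[n] z)
      have hw2 : T ^ 2 ≤ norm (f^[n] z) ^ 2 := by nlinarith
      linarith [hTc, hw2, h2]
  -- stronger bound in the escape region
  have hR : ∀ (n : ℕ) (z : ℂ), T ≤ norm z →
      norm (∏ i ∈ Finset.range (n + 1), f^[i] z) ≤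
        T ^ n * norm (f^[n] z) ^ 2 := by
    intro n
    induction n with
    | zero =>
      intro z hz
      simp only [zero_add, Finset.range_one, Finset.prod_singleton,
        Function.iterate_zero_apply, pow_zero, one_mul]
      nlinarith [norm_nonneg z]
    | succ n ih =>
      intro z hz
      rw [Finset.prod_range_succ, norm_mul]
      have h1 := ih z hz
      have h2 : T ≤ norm (f^[n] z) := hE n z hz
      have h3 : norm (f^[n] z) ^ 2 ≤ T * norm (f^[n + 1] z) := by
        rw [Function.iterate_succ_apply']
        have h4 := hlow (f^[n] z)
        have hw2 : T ^ 2 ≤ norm (f^[n] z) ^ 2 := by nlinarith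
        nlinarith [mul_le_mul_of_nonneg_left h4 hT0.le,
          mul_nonneg (sub_nonneg.2 hT1) (sub_nonneg.2 hw2)]
      have h5 : (0 : ℝ) ≤ norm (f^[n + 1] z) := norm_nonneg _
      have h6 : (0 : ℝ) ≤ norm (∏ i ∈ Finset.range (n + 1), f^[i] z) :=
        norm_nonneg _
      have hTn : (0 : ℝ) ≤ T ^ n := le_of_lt (pow_pos hT0 n)
      calc norm (∏ i ∈ Finset.range (n + 1), f^[i] z) * norm (f^[n + 1] z)
          ≤ (T ^ n * norm (f^[n] z) ^ 2) * norm (f^[n + 1] z) :=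
            mul_le_mul_of_nonneg_right h1 h5
        _ ≤ (T ^ n * (T * norm (f^[n + 1] z))) * norm (f^[n + 1] z) :=
            mul_le_mul_of_nonneg_right (mul_le_mul_of_nonneg_left h3 hTn) h5
        _ = T ^ (n + 1) * norm (f^[n + 1] z) ^ 2 := by ring
  -- main statement, by induction
  have hG : ∀ (n : ℕ) (y : ℂ),
      norm (∏ i ∈ Finset.range (n + 1), f^[i] y) ≤
        T ^ n * (1 + norm (f^[n] y) ^ 2) := by
    intro n
    induction n with
    | zero =>
      intro y
      simp only [zero_add, Finset.range_one, Finset.prod_singleton,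
        Function.iterate_zero_apply, pow_zero, one_mul]
      nlinarith [sq_nonneg (norm y - 1)]
    | succ n ih =>
      intro y
      by_cases hy : T ≤ norm y
      · calc norm (∏ i ∈ Finset.range (n + 1 + 1), f^[i] y)
            ≤ T ^ (n + 1) * norm (f^[n + 1] y) ^ 2 := hR (n + 1) y hy
          _ ≤ T ^ (n + 1) * (1 + norm (f^[n + 1] y) ^ 2) := by
              have hTn : (0 : ℝ) ≤ T ^ (n + 1) := le_of_lt (pow_pos hT0 _)
              nlinarith
      · push_neg at hy
        have hsplit : ∏ i ∈ Finset.range (n + 1 + 1), f^[i] y =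
            (∏ i ∈ Finset.range (n + 1), f^[i] (f y)) * y := by
          rw [Finset.prod_range_succ']
          simp only [Function.iterate_zero_apply]
          refine congrArg (· * y) (Finset.prod_congr rfl fun i _ => ?_)
          exact Function.iterate_succ_apply f i y
        rw [hsplit, norm_mul]
        have h1 := ih (f y)
        have h2 : (0 : ℝ) ≤ norm y := norm_nonneg _
        have h3 : f^[n] (f y) = f^[n + 1] y := (Function.iterate_succ_apply f n y).symm
        rw [h3] at h1
        calc norm (∏ i ∈ Finset.range (n + 1), f^[i] (f y)) * norm y
            ≤ (T ^ n * (1 + norm (f^[n + 1] y) ^ 2)) * T :=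
              mul_le_mul h1 hy.le h2 (by positivity)
          _ = T ^ (n + 1) * (1 + norm (f^[n + 1] y) ^ 2) := by ring
  exact hG N x
end

section
/- Let φ(x) = x² + c with c ∈ ℂ and N ≥ 1. Then the derivative of the N-th iterate satisfies (φ^N)′(x) = 2^N · x · φ(x) · φ²(x) ⋯ φ^{N−1}(x), and hence |φ^N(x)| · |(φ^N)′(x)| ≤ 2^N T^N (1 + |φ^N(x)|²) where T = (1 + √(1+4|c|))/2. -/
private theorem stmt_17_hasDeriv (c : ℂ) (N : ℕ) (x : ℂ) :
    HasDerivAt ((fun z : ℂ => z ^ 2 + c)^[N])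
      (2 ^ N * ∏ i ∈ Finset.range N, (fun z : ℂ => z ^ 2 + c)^[i] x) x := by
  induction N with
  | zero => simpa using hasDerivAt_id x
  | succ n ih =>
    rw [Function.iterate_succ']
    have h1 : HasDerivAt (fun z : ℂ => z ^ 2 + c)
        (2 * ((fun z : ℂ => z ^ 2 + c)^[n] x)) ((fun z : ℂ => z ^ 2 + c)^[n] x) := by
      simpa using ((hasDerivAt_pow 2 ((fun z : ℂ => z ^ 2 + c)^[n] x)).add_const c)
    have h2 := h1.comp x ih
    exact h2.congr_deriv (by rw [Finset.prod_range_succ]; ring)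

private theorem stmt_17_key (c : ℂ) (T : ℝ) (hT1 : 1 ≤ T)
    (hc : ‖c‖ = T ^ 2 - T) (x : ℂ) (N : ℕ) :
    ∏ i ∈ Finset.range (N + 1), ‖(fun z : ℂ => z ^ 2 + c)^[i] x‖ ≤
      T ^ N * (1 + ‖(fun z : ℂ => z ^ 2 + c)^[N] x‖ ^ 2) := by
  set f : ℂ → ℂ := fun z => z ^ 2 + c with hf
  set a : ℕ → ℝ := fun i => ‖f^[i] x‖ with ha'
  have ha : ∀ i, 0 ≤ a i := fun i => norm_nonneg _
  have hTpos : (0 : ℝ) < T := lt_of_lt_of_le one_pos hT1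
  have hstep : ∀ i, a i ^ 2 - T ^ 2 + T ≤ a (i + 1) := by
    intro i
    have h1 : f^[i + 1] x = (f^[i] x) ^ 2 + c := by
      rw [Function.iterate_succ_apply']
    have h2 : ‖(f^[i] x) ^ 2‖ ≤ ‖(f^[i] x) ^ 2 + c‖ + ‖c‖ := by
      calc ‖(f^[i] x) ^ 2‖ = ‖((f^[i] x) ^ 2 + c) + (-c)‖ := by
            congr 1; ring
        _ ≤ ‖(f^[i] x) ^ 2 + c‖ + ‖-c‖ := norm_add_le _ _
        _ = ‖(f^[i] x) ^ 2 + c‖ + ‖c‖ := by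
            rw [norm_neg]
    have h3 : ‖(f^[i] x) ^ 2‖ = a i ^ 2 := by
      simp [ha', norm_pow]
    have h4 : a (i + 1) = ‖(f^[i] x) ^ 2 + c‖ := congrArg (‖·‖) h1
    rw [h3, hc] at h2
    rw [h4]
    linarith
  have main : ∀ n, (∏ i ∈ Finset.range (n + 1), a i) ≤
      T ^ n * (if a n ≤ T then a n else a n ^ 2) := by
    intro n
    induction n with
    | zero =>
      simp only [zero_add, Finset.prod_range_one, pow_zero, one_mul]
      split_ifs with h
      · exact le_refl _
      · nlinarith [ha 0]
    | succ n ih =>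
      rw [Finset.prod_range_succ]
      have key2 : a (n + 1) * (if a n ≤ T then a n else a n ^ 2) ≤
          T * (if a (n + 1) ≤ T then a (n + 1) else a (n + 1) ^ 2) := by
        split_ifs with h1 h2 h2
        · nlinarith [ha (n + 1)]
        · push_neg at h2
          nlinarith [ha (n + 1)]
        · -- a n > T forces a (n+1) > T, contradiction
          exfalso
          push_neg at h1
          nlinarith [hstep n]
        · push_neg at h1 h2
          have hn2 : T ^ 2 ≤ a n ^ 2 := by nlinarith
          have h5 : a n ^ 2 ≤ T * a (n + 1) := by
            nlinarith [hstep n, mul_nonneg (sub_nonneg.2 hT1) (sub_nonneg.2 hn2)]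
          calc a (n + 1) * a n ^ 2 ≤ a (n + 1) * (T * a (n + 1)) :=
                mul_le_mul_of_nonneg_left h5 (ha _)
            _ = T * a (n + 1) ^ 2 := by ring
      calc (∏ i ∈ Finset.range (n + 1), a i) * a (n + 1)
          ≤ (T ^ n * (if a n ≤ T then a n else a n ^ 2)) * a (n + 1) :=
            mul_le_mul_of_nonneg_right ih (ha _)
        _ = T ^ n * (a (n + 1) * (if a n ≤ T then a n else a n ^ 2)) := by ring
        _ ≤ T ^ n * (T * (if a (n + 1) ≤ T then a (n + 1) else a (n + 1) ^ 2)) :=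
            mul_le_mul_of_nonneg_left key2 (pow_nonneg hTpos.le n)
        _ = T ^ (n + 1) * (if a (n + 1) ≤ T then a (n + 1) else a (n + 1) ^ 2) := by ring
  refine le_trans (main N) ?_
  have hB : (if a N ≤ T then a N else a N ^ 2) ≤ 1 + a N ^ 2 := by
    split_ifs with h
    · nlinarith [ha N, sq_nonneg (a N - 1)]
    · linarith
  exact mul_le_mul_of_nonneg_left hB (pow_nonneg hTpos.le N)

theorem stmt_17 (c : ℂ) (T : ℝ)
    (hT : T = (1 + Real.sqrt (1 + 4 * ‖c‖)) / 2)
    (N : ℕ) (hN : 1 ≤ N) (x : ℂ) :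
    deriv ((fun z : ℂ => z ^ 2 + c)^[N]) x =
      2 ^ N * ∏ i ∈ Finset.range N, (fun z : ℂ => z ^ 2 + c)^[i] x ∧
    ‖(fun z : ℂ => z ^ 2 + c)^[N] x‖ *
        ‖deriv ((fun z : ℂ => z ^ 2 + c)^[N]) x‖ ≤
      2 ^ N * T ^ N * (1 + ‖(fun z : ℂ => z ^ 2 + c)^[N] x‖ ^ 2) := by
  have h0 : (0 : ℝ) ≤ 1 + 4 * ‖c‖ := by positivity
  have hs : Real.sqrt (1 + 4 * ‖c‖) ^ 2 = 1 + 4 * ‖c‖ :=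
    Real.sq_sqrt h0
  have hs1 : 1 ≤ Real.sqrt (1 + 4 * ‖c‖) := by
    have h1 : Real.sqrt 1 ≤ Real.sqrt (1 + 4 * ‖c‖) :=
      Real.sqrt_le_sqrt (by linarith [norm_nonneg c])
    rwa [Real.sqrt_one] at h1
  have hT1 : 1 ≤ T := by rw [hT]; linarith
  have hc : ‖c‖ = T ^ 2 - T := by rw [hT]; nlinarith [hs]
  have hd := stmt_17_hasDeriv c N x
  refine ⟨hd.deriv, ?_⟩
  rw [hd.deriv]
  have hk := stmt_17_key c T hT1 hc x N
  rw [Finset.prod_range_succ] at hk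
  have habs : ‖2 ^ N * ∏ i ∈ Finset.range N, (fun z : ℂ => z ^ 2 + c)^[i] x‖
      = 2 ^ N * ∏ i ∈ Finset.range N, ‖(fun z : ℂ => z ^ 2 + c)^[i] x‖ := by
    rw [norm_mul, norm_pow, Complex.norm_two, norm_prod]
  rw [habs]
  calc ‖(fun z : ℂ => z ^ 2 + c)^[N] x‖ *
        (2 ^ N * ∏ i ∈ Finset.range N, ‖(fun z : ℂ => z ^ 2 + c)^[i] x‖)
      = 2 ^ N * ((∏ i ∈ Finset.range N, ‖(fun z : ℂ => z ^ 2 + c)^[i] x‖) *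
        ‖(fun z : ℂ => z ^ 2 + c)^[N] x‖) := by ring
    _ ≤ 2 ^ N * (T ^ N * (1 + ‖(fun z : ℂ => z ^ 2 + c)^[N] x‖ ^ 2)) := by
        exact mul_le_mul_of_nonneg_left hk (by positivity)
    _ = 2 ^ N * T ^ N * (1 + ‖(fun z : ℂ => z ^ 2 + c)^[N] x‖ ^ 2) := by ring
end
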